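/- Assume ζ(c) < 0 for all c ∈ [0,1). Then the map c ↦ x̄₀(c) is strictly decreasing on [0,1), and the map c ↦ γ(c) is strictly decreasing and continuously differentiable on [0,1). -/

import Mathlib

open MeasureTheory Real Set Filter Metric
open scoped Topology

/-- The (positive multiple of the) strictly increasing fundamental solution `ψ_λ` of the
Ornstein–Uhlenbeck equation `(1/2)σ² f'' + θ(μ - x) f' = λ f`, written as the integral
`ψ(x) = ∫₀^∞ t^(λ/θ - 1) exp(-t²/2 + a t (x - μ)) dt` with `a = √(2θ)/σ`. -/
noncomputable def OUpsi (lam th mu sig : ℝ) (x : ℝ) : ℝ :=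
  ∫ t in Set.Ioi (0:ℝ),
    t ^ (lam / th - 1) * Real.exp (-t ^ 2 / 2 + Real.sqrt (2 * th) / sig * t * (x - mu))

/-- `ζ(c) = (λ+θ)(1-c) - λΦ(c)`. -/
noncomputable def zetafun (lam th : ℝ) (Phi : ℝ → ℝ) (c : ℝ) : ℝ :=
  (lam + th) * (1 - c) - lam * Phi c

/-- `x̄₀(c) = θμΦ(c)/ζ(c)`. -/
noncomputable def xbar0fun (lam th mu : ℝ) (Phi : ℝ → ℝ) (c : ℝ) : ℝ :=
  th * mu * Phi c / zetafun lam th Phi c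

private lemma ou_meas (q c : ℝ) :
    AEStronglyMeasurable (fun t : ℝ => t ^ q * Real.exp (-t ^ 2 / 2 + c * t))
      (volume.restrict (Set.Ioi 0)) := by
  apply ContinuousOn.aestronglyMeasurable ?_ measurableSet_Ioi
  exact (ContinuousOn.rpow_const continuousOn_id
      (fun t ht => Or.inl (ne_of_gt ht))).mul (Continuous.continuousOn (by continuity))

private lemma ou_integrable {q : ℝ} (hq : -1 < q) (c : ℝ) :
    IntegrableOn (fun t : ℝ => t ^ q * Real.exp (-t ^ 2 / 2 + c * t)) (Set.Ioi 0) := by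
  refine Integrable.mono'
      (g := fun t => Real.exp (c ^ 2) * (t ^ q * Real.exp (-(4⁻¹ : ℝ) * t ^ 2)))
      ((integrableOn_rpow_mul_exp_neg_mul_sq (by norm_num) hq).const_mul _)
      (ou_meas q c) ?_
  filter_upwards [ae_restrict_mem measurableSet_Ioi] with t ht
  have h0 : (0:ℝ) < t := ht
  have h1 : 0 ≤ t ^ q := le_of_lt (Real.rpow_pos_of_pos h0 q)
  rw [Real.norm_eq_abs, abs_mul, abs_of_nonneg h1, abs_of_pos (Real.exp_pos _)]
  have h2 : Real.exp (-t ^ 2 / 2 + c * t)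
      ≤ Real.exp (c ^ 2) * Real.exp (-(4⁻¹ : ℝ) * t ^ 2) := by
    rw [← Real.exp_add]
    apply Real.exp_le_exp.2
    nlinarith [sq_nonneg (t / 2 - c)]
  calc t ^ q * Real.exp (-t ^ 2 / 2 + c * t)
      ≤ t ^ q * (Real.exp (c ^ 2) * Real.exp (-(4⁻¹ : ℝ) * t ^ 2)) :=
        mul_le_mul_of_nonneg_left h2 h1
    _ = Real.exp (c ^ 2) * (t ^ q * Real.exp (-(4⁻¹ : ℝ) * t ^ 2)) := by ring

private lemma ou_pos {q : ℝ} (hq : -1 < q) (c : ℝ) :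
    0 < ∫ t in Set.Ioi (0:ℝ), t ^ q * Real.exp (-t ^ 2 / 2 + c * t) := by
  rw [setIntegral_pos_iff_support_of_nonneg_ae ?_ (ou_integrable hq c)]
  · have hsub : Set.Ioi (0:ℝ) ⊆
        (Function.support fun t : ℝ => t ^ q * Real.exp (-t ^ 2 / 2 + c * t)) ∩ Set.Ioi 0 := by
      intro t ht
      have h0 : (0:ℝ) < t := ht
      refine ⟨ne_of_gt ?_, ht⟩
      positivity
    have h1 := measure_mono (μ := (volume : Measure ℝ)) hsub
    rw [Real.volume_Ioi] at h1
    exact lt_of_lt_of_le (by norm_num) h1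
  · filter_upwards [ae_restrict_mem measurableSet_Ioi] with t ht
    have h0 : (0:ℝ) < t := ht
    positivity

noncomputable def psiFun (q A mu : ℝ) (x : ℝ) : ℝ :=
  ∫ t in Set.Ioi (0:ℝ), t ^ q * Real.exp (-t ^ 2 / 2 + A * t * (x - mu))

noncomputable def psiD (q A mu : ℝ) (x : ℝ) : ℝ := A * psiFun (q + 1) A mu x

private lemma ou_meas' (q A mu x : ℝ) :
    AEStronglyMeasurable (fun t : ℝ => t ^ q * Real.exp (-t ^ 2 / 2 + A * t * (x - mu)))
      (volume.restrict (Set.Ioi 0)) := by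
  have h := ou_meas q (A * (x - mu))
  simpa [show ∀ t : ℝ, A * (x - mu) * t = A * t * (x - mu) from fun t => by ring] using h

private lemma ou_integrable' {q : ℝ} (hq : -1 < q) (A mu x : ℝ) :
    IntegrableOn (fun t : ℝ => t ^ q * Real.exp (-t ^ 2 / 2 + A * t * (x - mu))) (Set.Ioi 0) := by
  have h := ou_integrable hq (A * (x - mu))
  simpa [show ∀ t : ℝ, A * (x - mu) * t = A * t * (x - mu) from fun t => by ring] using h

lemma psiFun_hasDerivAt {q : ℝ} (hq : -1 < q) (A mu x₀ : ℝ) :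
    HasDerivAt (psiFun q A mu) (psiD q A mu x₀) x₀ := by
  have key := hasDerivAt_integral_of_dominated_loc_of_deriv_le
    (μ := volume.restrict (Set.Ioi 0)) (x₀ := x₀)
    (F := fun x t => t ^ q * Real.exp (-t ^ 2 / 2 + A * t * (x - mu)))
    (F' := fun x t => A * (t ^ (q + 1) * Real.exp (-t ^ 2 / 2 + A * t * (x - mu))))
    (bound := fun t => |A| * (t ^ (q + 1) *
      Real.exp (-t ^ 2 / 2 + |A| * t * ((|x₀ - mu| + 1) - 0))))
    (Metric.ball_mem_nhds x₀ one_pos)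
    (Filter.Eventually.of_forall fun x => ou_meas' q A mu x)
    (ou_integrable' hq A mu x₀)
    ((ou_meas' (q + 1) A mu x₀).const_mul A)
    ?_ (((ou_integrable' (by linarith) |A| 0 (|x₀ - mu| + 1))).const_mul |A|) ?_
  · have h2 := key.2
    rw [MeasureTheory.integral_const_mul] at h2
    exact h2
  · -- bound
    filter_upwards [ae_restrict_mem measurableSet_Ioi] with t ht
    intro x hx
    have h0 : (0:ℝ) < t := ht
    have htq : 0 ≤ t ^ (q + 1) := le_of_lt (Real.rpow_pos_of_pos h0 _)
    have hxb : |x - mu| ≤ |x₀ - mu| + 1 := by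
      have := mem_ball_iff_norm.1 hx
      rw [Real.norm_eq_abs] at this
      calc |x - mu| = |(x - x₀) + (x₀ - mu)| := by ring_nf
        _ ≤ |x - x₀| + |x₀ - mu| := abs_add_le _ _
        _ ≤ |x₀ - mu| + 1 := by linarith
    have hexp : Real.exp (-t ^ 2 / 2 + A * t * (x - mu))
        ≤ Real.exp (-t ^ 2 / 2 + |A| * t * ((|x₀ - mu| + 1) - 0)) := by
      apply Real.exp_le_exp.2
      have h1 : A * (x - mu) ≤ |A| * (|x₀ - mu| + 1) := by
        calc A * (x - mu) ≤ |A * (x - mu)| := le_abs_self _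
          _ = |A| * |x - mu| := abs_mul _ _
          _ ≤ |A| * (|x₀ - mu| + 1) := mul_le_mul_of_nonneg_left hxb (abs_nonneg A)
      nlinarith
    rw [Real.norm_eq_abs, abs_mul, abs_mul, abs_of_nonneg htq, abs_of_pos (Real.exp_pos _)]
    exact mul_le_mul_of_nonneg_left (mul_le_mul_of_nonneg_left hexp htq) (abs_nonneg A)
  · -- differentiability
    filter_upwards [ae_restrict_mem measurableSet_Ioi] with t ht
    intro x hx
    have h0 : (0:ℝ) < t := ht
    have h1 : HasDerivAt (fun y : ℝ => -t ^ 2 / 2 + A * t * (y - mu)) (A * t) x := by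
      have : HasDerivAt (fun y : ℝ => y - mu) 1 x := (hasDerivAt_id x).sub_const mu
      simpa using (this.const_mul (A * t)).const_add (-t ^ 2 / 2)
    have h2 := (h1.exp).const_mul (t ^ q)
    refine h2.congr_deriv ?_
    rw [Real.rpow_add_one (ne_of_gt h0) q]
    ring

noncomputable def psiDD (q A mu : ℝ) (x : ℝ) : ℝ := A * psiD (q + 1) A mu x
noncomputable def hFun (q A mu : ℝ) (x : ℝ) : ℝ := x - psiFun q A mu x / psiD q A mu x


lemma psiFun_pos {q : ℝ} (hq : -1 < q) (A mu x : ℝ) : 0 < psiFun q A mu x := by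
  have h := ou_pos hq (A * (x - mu))
  unfold psiFun
  simpa [show ∀ t : ℝ, A * (x - mu) * t = A * t * (x - mu) from fun t => by ring] using h

lemma psiD_pos {q : ℝ} (hq : -1 < q) {A : ℝ} (hA : 0 < A) (mu x : ℝ) : 0 < psiD q A mu x :=
  mul_pos hA (psiFun_pos (by linarith) A mu x)

lemma psiDD_pos {q : ℝ} (hq : -1 < q) {A : ℝ} (hA : 0 < A) (mu x : ℝ) : 0 < psiDD q A mu x :=
  mul_pos hA (psiD_pos (by linarith) hA mu x)

lemma psiD_hasDerivAt {q : ℝ} (hq : -1 < q) (A mu x₀ : ℝ) :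
    HasDerivAt (psiD q A mu) (psiDD q A mu x₀) x₀ := by
  have h := (psiFun_hasDerivAt (q := q + 1) (by linarith) A mu x₀).const_mul A
  exact h

lemma psiFun_contDiff {q : ℝ} (hq : -1 < q) (A mu : ℝ) : ContDiff ℝ 1 (psiFun q A mu) := by
  rw [contDiff_one_iff_deriv]
  constructor
  · exact fun x => (psiFun_hasDerivAt hq A mu x).differentiableAt
  · have : deriv (psiFun q A mu) = psiD q A mu :=
      funext fun x => (psiFun_hasDerivAt hq A mu x).deriv
    rw [this]
    exact continuous_iff_continuousAt.2 fun x => ((psiD_hasDerivAt hq A mu x).differentiableAt).continuousAt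
lemma psiD_contDiff {q : ℝ} (hq : -1 < q) (A mu : ℝ) : ContDiff ℝ 1 (psiD q A mu) := by
  rw [contDiff_one_iff_deriv]
  constructor
  · exact fun x => (psiD_hasDerivAt hq A mu x).differentiableAt
  · have : deriv (psiD q A mu) = psiDD q A mu :=
      funext fun x => (psiD_hasDerivAt hq A mu x).deriv
    rw [this]
    have : ∀ x, HasDerivAt (psiDD q A mu) (A * psiDD (q+1) A mu x) x :=
      fun x => (psiD_hasDerivAt (by linarith) A mu x).const_mul A
    exact continuous_iff_continuousAt.2 fun x => ((this x).differentiableAt).continuousAt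

lemma hFun_contDiff {q : ℝ} (hq : -1 < q) {A : ℝ} (hA : 0 < A) (mu : ℝ) :
    ContDiff ℝ 1 (hFun q A mu) :=
  contDiff_id.sub ((psiFun_contDiff hq A mu).div (psiD_contDiff hq A mu)
    (fun x => ne_of_gt (psiD_pos hq hA mu x)))

lemma hFun_hasDerivAt {q : ℝ} (hq : -1 < q) {A : ℝ} (hA : 0 < A) (mu x : ℝ) :
    HasDerivAt (hFun q A mu)
      (psiFun q A mu x * psiDD q A mu x / (psiD q A mu x) ^ 2) x := by
  have hne := ne_of_gt (psiD_pos hq hA mu x)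
  have h := (hasDerivAt_id x).sub
    (((psiFun_hasDerivAt hq A mu x).div (psiD_hasDerivAt hq A mu x) hne))
  refine h.congr_deriv ?_
  have heq : psiD q A mu x * psiD q A mu x = (psiD q A mu x) ^ 2 := by ring
  field_simp
  ring

lemma hFun_strictMono {q : ℝ} (hq : -1 < q) {A : ℝ} (hA : 0 < A) (mu : ℝ) :
    StrictMono (hFun q A mu) := by
  apply strictMono_of_deriv_pos
  intro x
  rw [(hFun_hasDerivAt hq hA mu x).deriv]
  have h1 := psiFun_pos hq A mu x
  have h2 := psiDD_pos hq hA mu x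
  have h3 := psiD_pos hq hA mu x
  positivity

theorem xbar_facts (lam th mu : ℝ)
    (hlam : 0 < lam) (hth : 0 < th) (hmu : 0 < mu)
    (Phi : ℝ → ℝ) (hPhiC2 : ContDiff ℝ 2 Phi)
    (hPhiconv : StrictConvexOn ℝ Set.univ Phi)
    (hPhi' : ∀ c ∈ Set.Icc (0:ℝ) 1, deriv Phi c < 0) (hPhi1 : Phi 1 = 0)
    (hzeta : ∀ c ∈ Set.Ico (0:ℝ) 1, zetafun lam th Phi c < 0) :
    StrictAntiOn (xbar0fun lam th mu Phi) (Set.Ico (0:ℝ) 1) ∧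
    ContDiffOn ℝ 1 (xbar0fun lam th mu Phi) (Set.Ico (0:ℝ) 1) := by
  have hPhidiff : Differentiable ℝ Phi := hPhiC2.differentiable (by norm_num)
  have hC1 : ContDiff ℝ 1 Phi := hPhiC2.of_le (by norm_num)
  have hzC1 : ContDiff ℝ 1 (zetafun lam th Phi) := by
    unfold zetafun
    exact (contDiff_const.mul (contDiff_const.sub contDiff_id)).sub (contDiff_const.mul hC1)
  have hnum : ContDiff ℝ 1 (fun c => th * mu * Phi c) := contDiff_const.mul hC1
  have hbC1 : ContDiffOn ℝ 1 (xbar0fun lam th mu Phi) (Set.Ico (0:ℝ) 1) := by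
    unfold xbar0fun
    exact hnum.contDiffOn.div hzC1.contDiffOn (fun c hc => ne_of_lt (hzeta c hc))
  refine ⟨?_, hbC1⟩
  apply strictAntiOn_of_deriv_neg (convex_Ico 0 1)
  · exact hbC1.continuousOn.congr (fun c _ => rfl) |>.mono (fun x hx => hx) |>.congr fun c _ => rfl
  · intro c hc
    rw [interior_Ico] at hc
    have hcIco : c ∈ Set.Ico (0:ℝ) 1 := ⟨le_of_lt hc.1, hc.2⟩
    have hzne : zetafun lam th Phi c ≠ 0 := ne_of_lt (hzeta c hcIco)
    have hdnum : HasDerivAt (fun c => th * mu * Phi c) (th * mu * deriv Phi c) c :=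
      ((hPhidiff c).hasDerivAt).const_mul (th * mu)
    have hdden : HasDerivAt (zetafun lam th Phi)
        ((lam + th) * (0 - 1) - lam * deriv Phi c) c := by
      unfold zetafun
      exact (((hasDerivAt_const c (1:ℝ)).sub (hasDerivAt_id c)).const_mul (lam + th)).sub
        (((hPhidiff c).hasDerivAt).const_mul lam)
    have hdb : HasDerivAt (xbar0fun lam th mu Phi)
        ((th * mu * deriv Phi c * zetafun lam th Phi c -
          th * mu * Phi c * ((lam + th) * (0 - 1) - lam * deriv Phi c)) /
          (zetafun lam th Phi c) ^ 2) c := hdnum.div hdden hzne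
    rw [hdb.deriv]
    -- key inequality
    have hslope := hPhiconv.deriv_lt_slope (Set.mem_univ c) (Set.mem_univ 1) hc.2
      (hPhidiff c)
    rw [slope_def_field, hPhi1] at hslope
    have h1c : (0:ℝ) < 1 - c := by linarith [hc.2]
    have hkey : (1 - c) * deriv Phi c + Phi c < 0 := by
      have := (lt_div_iff₀ h1c).1 hslope
      linarith
    apply div_neg_of_neg_of_pos
    · have heq : th * mu * deriv Phi c * zetafun lam th Phi c -
          th * mu * Phi c * ((lam + th) * (0 - 1) - lam * deriv Phi c)
          = th * mu * (lam + th) * ((1 - c) * deriv Phi c + Phi c) := by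
        unfold zetafun; ring
      rw [heq]
      apply mul_neg_of_pos_of_neg ?_ hkey
      positivity
    · exact pow_two_pos_of_ne_zero hzne

/-- assume `ζ < 0` on `[0,1)` and for each `c ∈ [0,1)` let `γ(c)` be the
unique real solution of `ψ(x) = ψ'(x)(x - x̄₀(c))`, which lies in `(x̄₀(c), ∞)`. Then
`x̄₀` is strictly decreasing on `[0,1)`, and `γ` is strictly decreasing and continuously
differentiable on `[0,1)`. -/
theorem statement14 (lam th mu sig : ℝ)
    (hlam : 0 < lam) (hth : 0 < th) (hmu : 0 < mu) (hsig : 0 < sig)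
    (Phi : ℝ → ℝ) (hPhiC2 : ContDiff ℝ 2 Phi)
    (hPhiconv : StrictConvexOn ℝ Set.univ Phi)
    (hPhi' : ∀ c ∈ Set.Icc (0:ℝ) 1, deriv Phi c < 0) (hPhi1 : Phi 1 = 0)
    (hzeta : ∀ c ∈ Set.Ico (0:ℝ) 1, zetafun lam th Phi c < 0)
    (gamma : ℝ → ℝ)
    (hgamma : ∀ c ∈ Set.Ico (0:ℝ) 1,
      OUpsi lam th mu sig (gamma c)
        = deriv (OUpsi lam th mu sig) (gamma c) * (gamma c - xbar0fun lam th mu Phi c) ∧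
      xbar0fun lam th mu Phi c < gamma c ∧
      ∀ y : ℝ, OUpsi lam th mu sig y
        = deriv (OUpsi lam th mu sig) y * (y - xbar0fun lam th mu Phi c) → y = gamma c)
    :
    StrictAntiOn (xbar0fun lam th mu Phi) (Set.Ico (0:ℝ) 1) ∧
    StrictAntiOn gamma (Set.Ico (0:ℝ) 1) ∧
    ContDiffOn ℝ 1 gamma (Set.Ico (0:ℝ) 1) := by
  obtain ⟨hbanti, hbC1⟩ :=
    xbar_facts lam th mu hlam hth hmu Phi hPhiC2 hPhiconv hPhi' hPhi1 hzeta
  have hq : (-1:ℝ) < lam / th - 1 := by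
    have : 0 < lam / th := div_pos hlam hth
    linarith
  have hA : 0 < Real.sqrt (2 * th) / sig :=
    div_pos (Real.sqrt_pos.2 (by linarith)) hsig
  set q : ℝ := lam / th - 1 with hqdef
  set A : ℝ := Real.sqrt (2 * th) / sig with hAdef
  have hψeq : OUpsi lam th mu sig = psiFun q A mu := rfl
  have hψderiv : deriv (OUpsi lam th mu sig) = psiD q A mu := by
    rw [hψeq]
    exact funext fun x => (psiFun_hasDerivAt hq A mu x).deriv
  set b : ℝ → ℝ := xbar0fun lam th mu Phi with hbdef
  set s : Set ℝ := Set.Ico (0:ℝ) 1 with hsdef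
  -- the key identity: hFun (gamma c) = b c
  have hhb : ∀ c ∈ s, hFun q A mu (gamma c) = b c := by
    intro c hc
    have heq := (hgamma c hc).1
    rw [hψderiv, hψeq] at heq
    have hne : psiD q A mu (gamma c) ≠ 0 := ne_of_gt (psiD_pos hq hA mu _)
    unfold hFun
    rw [heq]
    field_simp
    ring
  have hmono := hFun_strictMono hq hA mu
  -- strict antitonicity of gamma
  have hganti : StrictAntiOn gamma s := by
    intro c1 h1 c2 h2 hlt
    have hb : b c2 < b c1 := hbanti h1 h2 hlt
    rw [← hhb c1 h1, ← hhb c2 h2] at hb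
    exact hmono.lt_iff_lt.1 hb
  refine ⟨hbanti, hganti, ?_⟩
  -- continuity of gamma within s
  have hγcont : ∀ c₀ ∈ s, Tendsto gamma (𝓝[s] c₀) (𝓝 (gamma c₀)) := by
    intro c₀ hc₀
    have hbc : Tendsto b (𝓝[s] c₀) (𝓝 (b c₀)) := (hbC1.continuousOn c₀ hc₀)
    refine tendsto_order.2 ⟨?_, ?_⟩
    · intro y hy
      have h1 : hFun q A mu y < b c₀ := by
        rw [← hhb c₀ hc₀]; exact hmono hy
      filter_upwards [hbc.eventually (eventually_gt_nhds h1), self_mem_nhdsWithin]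
        with c hcb hcs
      rw [← hhb c hcs] at hcb
      exact hmono.lt_iff_lt.1 hcb
    · intro y hy
      have h1 : b c₀ < hFun q A mu y := by
        rw [← hhb c₀ hc₀]; exact hmono hy
      filter_upwards [hbc.eventually (eventually_lt_nhds h1), self_mem_nhdsWithin]
        with c hcb hcs
      rw [← hhb c hcs] at hcb
      exact hmono.lt_iff_lt.1 hcb
  -- C¹ smoothness of gamma
  intro c₀ hc₀
  set y₀ : ℝ := gamma c₀ with hy₀
  have hd : psiFun q A mu y₀ * psiDD q A mu y₀ / (psiD q A mu y₀) ^ 2 ≠ 0 := by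
    have h1 := psiFun_pos hq A mu y₀
    have h2 := psiDD_pos hq hA mu y₀
    have h3 := psiD_pos hq hA mu y₀
    positivity
  have hC1at : ContDiffAt ℝ 1 (hFun q A mu) y₀ := (hFun_contDiff hq hA mu).contDiffAt
  have hf' := (hFun_hasDerivAt hq hA mu y₀).hasFDerivAt_equiv hd
  have hsf : HasStrictFDerivAt (hFun q A mu)
      ((ContinuousLinearEquiv.unitsEquivAut ℝ
        (Units.mk0 _ hd) : ℝ ≃L[ℝ] ℝ) : ℝ →L[ℝ] ℝ) y₀ :=
    hC1at.hasStrictFDerivAt' hf' one_ne_zero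
  have hLC1 : ContDiffAt ℝ 1 (hC1at.localInverse hf' one_ne_zero) (hFun q A mu y₀) :=
    hC1at.to_localInverse hf' one_ne_zero
  set L : ℝ → ℝ := hC1at.localInverse hf' one_ne_zero with hLdef
  have hLb : ContDiffAt ℝ 1 L (b c₀) := by rw [← hhb c₀ hc₀]; exact hLC1
  have hcomp : ContDiffWithinAt ℝ 1 (L ∘ b) s c₀ :=
    hLb.comp_contDiffWithinAt c₀ (hbC1 c₀ hc₀)
  have hevl : ∀ᶠ x in 𝓝 y₀, L (hFun q A mu x) = x := hsf.eventually_left_inverse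
  have hev2 : ∀ᶠ c in 𝓝[s] c₀, L (hFun q A mu (gamma c)) = gamma c :=
    (hγcont c₀ hc₀).eventually hevl
  have hevEq : gamma =ᶠ[𝓝[s] c₀] (L ∘ b) := by
    filter_upwards [hev2, self_mem_nhdsWithin] with c h1 h2
    rw [Function.comp_apply, ← hhb c h2, h1]
  have hpt : gamma c₀ = (L ∘ b) c₀ := by
    rw [Function.comp_apply, ← hhb c₀ hc₀]
    exact (hsf.localInverse_apply_image).symm
  exact hcomp.congr_of_eventuallyEq hevEq hpt
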